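/- Let ℓ be an odd prime and let A be a nontrivial finite subgroup of SL₂ of the algebraic closure of F_ℓ. Then the sum over all elements of A, taken in the matrix ring M₂(F̄_ℓ), is the zero matrix. -/
import Mathlib


/-- Let ℓ be an odd prime and A a nontrivial finite subgroup of
SL₂ of the algebraic closure of F_ℓ. Then the sum over all elements of A,
taken in the matrix ring M₂(F̄_ℓ), is the zero matrix. -/
theorem sum_of_finite_subgroup_SL2_eq_zero
    (ℓ : ℕ) [Fact ℓ.Prime] (hℓ : ℓ ≠ 2)
    (A : Subgroup (Matrix.SpecialLinearGroup (Fin 2) (AlgebraicClosure (ZMod ℓ))))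
    [Fintype A] (hA : A ≠ ⊥) :
    ∑ a : A, ((a : Matrix.SpecialLinearGroup (Fin 2) (AlgebraicClosure (ZMod ℓ))) :
      Matrix (Fin 2) (Fin 2) (AlgebraicClosure (ZMod ℓ))) = 0 := by
  set K := AlgebraicClosure (ZMod ℓ) with hK
  set S : Matrix (Fin 2) (Fin 2) K :=
    ∑ a : A, ((a : Matrix.SpecialLinearGroup (Fin 2) K) : Matrix (Fin 2) (Fin 2) K) with hS
  have h2 : (2 : K) ≠ 0 := by
    intro h
    have : ((2 : ℕ) : K) = 0 := by exact_mod_cast h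
    rw [CharP.cast_eq_zero_iff K ℓ] at this
    exact hℓ ((Nat.prime_dvd_prime_iff_eq (Fact.out) Nat.prime_two).mp this)
  -- Cayley-Hamilton for SL2: g + g⁻¹ = (tr g) • 1
  have key3 : ∀ g : Matrix.SpecialLinearGroup (Fin 2) K,
      ((g : Matrix.SpecialLinearGroup (Fin 2) K) : Matrix (Fin 2) (Fin 2) K)
        + ((g⁻¹ : Matrix.SpecialLinearGroup (Fin 2) K) : Matrix (Fin 2) (Fin 2) K)
        = (Matrix.trace ((g : Matrix.SpecialLinearGroup (Fin 2) K) :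
            Matrix (Fin 2) (Fin 2) K)) • (1 : Matrix (Fin 2) (Fin 2) K) := by
    intro g
    rw [Matrix.SpecialLinearGroup.coe_inv, Matrix.adjugate_fin_two]
    ext i j
    fin_cases i <;> fin_cases j <;>
      simp [Matrix.trace_fin_two, Matrix.one_apply] <;> ring
  -- reindexing by inversion
  have key2 : S = ∑ a : A, (((a⁻¹ : A) : Matrix.SpecialLinearGroup (Fin 2) K) :
      Matrix (Fin 2) (Fin 2) K) := by
    exact (Fintype.sum_equiv (Equiv.inv A) _ _ (fun a => rfl)).symm
  -- left multiplication fixes S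
  have key1 : ∀ g : A, ((g : Matrix.SpecialLinearGroup (Fin 2) K) :
      Matrix (Fin 2) (Fin 2) K) * S = S := by
    intro g
    rw [hS, Finset.mul_sum]
    refine Fintype.sum_equiv (Equiv.mulLeft g) _ _ (fun a => ?_)
    simp [Equiv.mulLeft]
  set t : K := ∑ a : A, Matrix.trace
    ((a : Matrix.SpecialLinearGroup (Fin 2) K) : Matrix (Fin 2) (Fin 2) K) with ht
  have h2S : (2 : K) • S = t • (1 : Matrix (Fin 2) (Fin 2) K) := by
    have hsum : S + S = ∑ a : A,
        (((a : Matrix.SpecialLinearGroup (Fin 2) K) : Matrix (Fin 2) (Fin 2) K)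
          + (((a⁻¹ : A) : Matrix.SpecialLinearGroup (Fin 2) K) : Matrix (Fin 2) (Fin 2) K)) := by
      rw [Finset.sum_add_distrib, ← hS, ← key2]
    rw [two_smul, hsum, ht, Finset.sum_smul]
    refine Finset.sum_congr rfl (fun a _ => ?_)
    have := key3 (a : Matrix.SpecialLinearGroup (Fin 2) K)
    simpa using this
  -- a nontrivial element
  haveI : Nontrivial A := (Subgroup.nontrivial_iff_ne_bot A).mpr hA
  obtain ⟨g, hg1⟩ := exists_ne (1 : A)
  have hg : t • ((g : Matrix.SpecialLinearGroup (Fin 2) K) : Matrix (Fin 2) (Fin 2) K)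
      = t • (1 : Matrix (Fin 2) (Fin 2) K) := by
    have h := key1 g
    have h' : ((g : Matrix.SpecialLinearGroup (Fin 2) K) : Matrix (Fin 2) (Fin 2) K)
        * ((2:K) • S) = (2:K) • S := by
      rw [Matrix.mul_smul, h]
    rw [h2S] at h'
    rw [Matrix.mul_smul, mul_one] at h'
    exact h'
  by_cases htz : t = 0
  · rw [htz, zero_smul] at h2S
    have := congrArg (fun M => (2:K)⁻¹ • M) h2S
    simpa [smul_smul, inv_mul_cancel₀ h2] using this
  · exfalso
    apply hg1
    have hmat : ((g : Matrix.SpecialLinearGroup (Fin 2) K) : Matrix (Fin 2) (Fin 2) K)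
        = (1 : Matrix (Fin 2) (Fin 2) K) := smul_right_injective _ htz hg
    have : (g : Matrix.SpecialLinearGroup (Fin 2) K) = 1 := by
      ext i j
      rw [hmat]
      simp
    exact_mod_cast this
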